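/- Let F = {f₁,f₂,f₃} and G = {g₁,g₂,g₃} be unit-norm frames of ℝ² with three vectors each. Then F and G are equivalent if and only if the multiset {|⟨f₁,f₂⟩|, |⟨f₁,f₃⟩|, |⟨f₂,f₃⟩|} equals the multiset {|⟨g₁,g₂⟩|, |⟨g₁,g₃⟩|, |⟨g₂,g₃⟩|}. -/

import Mathlib

open scoped RealInnerProductSpace

/-- Two frames are equivalent when one is obtained from the other by a
composition of a common orthogonal transformation of `ℝ²`, a permutation of the
indices, and sign changes of individual vectors. -/
def FrameEquiv {k : ℕ} (f g : Fin k → EuclideanSpace ℝ (Fin 2)) : Prop :=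
  ∃ (U : EuclideanSpace ℝ (Fin 2) ≃ₗᵢ[ℝ] EuclideanSpace ℝ (Fin 2))
    (σ : Equiv.Perm (Fin k)) (ε : Fin k → ℝ),
      (∀ i, ε i = 1 ∨ ε i = -1) ∧ ∀ i, g i = ε i • U (f (σ i))

local notation "E2" => EuclideanSpace ℝ (Fin 2)

lemma gramDet (u v w : E2) :
    ⟪u,u⟫*⟪v,v⟫*⟪w,w⟫ + 2*⟪u,v⟫*⟪u,w⟫*⟪v,w⟫ - ⟪u,u⟫*⟪v,w⟫^2 - ⟪v,v⟫*⟪u,w⟫^2 - ⟪w,w⟫*⟪u,v⟫^2 = 0 := by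
  simp only [PiLp.inner_apply, RCLike.inner_apply, Fin.sum_univ_two, conj_trivial]
  ring

lemma indep_of_sq_ne_one {u v : E2} (hu : ⟪u,u⟫ = 1) (hv : ⟪v,v⟫ = 1)
    (h : ⟪u,v⟫ ^ 2 ≠ 1) : LinearIndependent ℝ ![u, v] := by
  rw [LinearIndependent.pair_iff]
  intro s t hst
  have h1 : ⟪u, s • u + t • v⟫ = 0 := by rw [hst]; exact inner_zero_right _
  have h2 : ⟪v, s • u + t • v⟫ = 0 := by rw [hst]; exact inner_zero_right _
  rw [inner_add_right, real_inner_smul_right, real_inner_smul_right, hu] at h1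
  rw [inner_add_right, real_inner_smul_right, real_inner_smul_right, hv] at h2
  rw [real_inner_comm u v] at h2
  have ht : t * (1 - ⟪u,v⟫ ^ 2) = 0 := by linear_combination h2 - ⟪u,v⟫ * h1
  have ht0 : t = 0 := by
    rcases mul_eq_zero.mp ht with h' | h'
    · exact h'
    · exact absurd (by linarith : ⟪u,v⟫ ^ 2 = 1) h
  refine ⟨by rw [ht0] at h1; linarith, ht0⟩

lemma eq_smul_of_sq_eq_one {u v : E2} (hu : ⟪u,u⟫ = 1) (hv : ⟪v,v⟫ = 1)
    (h : ⟪u,v⟫ ^ 2 = 1) : v = ⟪u,v⟫ • u := by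
  have key : ⟪v - ⟪u,v⟫ • u, v - ⟪u,v⟫ • u⟫ = 0 := by
    rw [inner_sub_left, inner_sub_right, inner_sub_right, real_inner_smul_left,
      real_inner_smul_left, real_inner_smul_right, real_inner_smul_right]
    simp only [real_inner_comm u v, hu, hv]
    linear_combination -h
  exact sub_eq_zero.mp (inner_self_eq_zero.mp key)

lemma msA {α : Type*} (x y z : α) : ({x,y,z} : Multiset α) = {y,x,z} := by
  change x ::ₘ y ::ₘ {z} = y ::ₘ x ::ₘ {z}
  exact Multiset.cons_swap x y {z}

lemma msB {α : Type*} (x y z : α) : ({x,y,z} : Multiset α) = {x,z,y} := by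
  change x ::ₘ y ::ₘ z ::ₘ 0 = x ::ₘ z ::ₘ y ::ₘ 0
  rw [Multiset.cons_swap y z]

lemma ms2_cases {α : Type*} {y z q r : α} (h : ({y,z} : Multiset α) = {q,r}) :
    (q = y ∧ r = z) ∨ (q = z ∧ r = y) := by
  have hq : q ∈ ({y,z} : Multiset α) := by rw [h]; simp
  simp only [Multiset.insert_eq_cons, Multiset.mem_cons, Multiset.mem_singleton] at hq
  simp only [Multiset.insert_eq_cons] at h
  rcases hq with hq | hq
  · rw [hq] at h
    have h2 := (Multiset.cons_inj_right y).mp h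
    exact Or.inl ⟨hq, (Multiset.singleton_inj.mp h2).symm⟩
  · right
    refine ⟨hq, ?_⟩
    have hr : r ∈ (y ::ₘ ({z} : Multiset α)) := by rw [h]; simp
    simp only [Multiset.mem_cons, Multiset.mem_singleton] at hr
    rcases hr with hr | hr
    · exact hr
    · rw [hq, hr] at h
      have hy : y ∈ (z ::ₘ ({z} : Multiset α)) := by rw [← h]; simp
      simp only [Multiset.mem_cons, Multiset.mem_singleton, or_self] at hy
      rw [hr, ← hy]

lemma ms3_cases {α : Type*} {x y z p q r : α} (h : ({x,y,z} : Multiset α) = {p,q,r}) :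
    (p = x ∧ q = y ∧ r = z) ∨ (p = x ∧ q = z ∧ r = y) ∨
    (p = y ∧ q = x ∧ r = z) ∨ (p = y ∧ q = z ∧ r = x) ∨
    (p = z ∧ q = x ∧ r = y) ∨ (p = z ∧ q = y ∧ r = x) := by
  have hp : p ∈ ({x,y,z} : Multiset α) := by rw [h]; simp
  simp only [Multiset.insert_eq_cons, Multiset.mem_cons, Multiset.mem_singleton] at hp
  simp only [Multiset.insert_eq_cons] at h
  rcases hp with hp | hp | hp
  · rw [hp] at h
    have h2 := (Multiset.cons_inj_right x).mp h
    rcases ms2_cases h2 with ⟨h3, h4⟩ | ⟨h3, h4⟩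
    · exact Or.inl ⟨hp, h3, h4⟩
    · exact Or.inr (Or.inl ⟨hp, h3, h4⟩)
  · rw [hp] at h
    rw [show (x ::ₘ y ::ₘ ({z} : Multiset α)) = y ::ₘ x ::ₘ {z} from Multiset.cons_swap x y {z}] at h
    have h2 := (Multiset.cons_inj_right y).mp h
    rcases ms2_cases h2 with ⟨h3, h4⟩ | ⟨h3, h4⟩
    · exact Or.inr (Or.inr (Or.inl ⟨hp, h3, h4⟩))
    · exact Or.inr (Or.inr (Or.inr (Or.inl ⟨hp, h3, h4⟩)))
  · rw [hp] at h
    rw [show (x ::ₘ y ::ₘ ({z} : Multiset α)) = z ::ₘ x ::ₘ {y} from by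
      change x ::ₘ y ::ₘ z ::ₘ 0 = z ::ₘ x ::ₘ y ::ₘ 0
      rw [Multiset.cons_swap y z, Multiset.cons_swap x z]] at h
    have h2 := (Multiset.cons_inj_right z).mp h
    rcases ms2_cases h2 with ⟨h3, h4⟩ | ⟨h3, h4⟩
    · exact Or.inr (Or.inr (Or.inr (Or.inr (Or.inl ⟨hp, h3, h4⟩))))
    · exact Or.inr (Or.inr (Or.inr (Or.inr (Or.inr ⟨hp, h3, h4⟩))))

lemma sign_exists (a b c a' b' c' : ℝ) (ha : |a| = |a'|) (hb : |b| = |b'|) (hc : |c| = |c'|)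
    (hprod : a * b * c = a' * b' * c') :
    ∃ s t u : ℝ, (s = 1 ∨ s = -1) ∧ (t = 1 ∨ t = -1) ∧ (u = 1 ∨ u = -1) ∧
      s * t * u = 1 ∧ s * a = a' ∧ t * b = b' ∧ u * c = c' := by
  have hA : a' = a ∨ a' = -a := abs_eq_abs.mp ha.symm
  have hB : b' = b ∨ b' = -b := abs_eq_abs.mp hb.symm
  have hC : c' = c ∨ c' = -c := abs_eq_abs.mp hc.symm
  set s : ℝ := if a' = a then 1 else -1 with hs
  set t : ℝ := if b' = b then 1 else -1 with ht
  set u : ℝ := if c' = c then 1 else -1 with hu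
  have hs1 : s = 1 ∨ s = -1 := by unfold s; split <;> simp
  have ht1 : t = 1 ∨ t = -1 := by unfold t; split <;> simp
  have hu1 : u = 1 ∨ u = -1 := by unfold u; split <;> simp
  have hsa : s * a = a' := by
    unfold s; split
    · simpa using (by assumption : a' = a).symm
    · rcases hA with h | h
      · exact absurd h (by assumption)
      · rw [h]; ring
  have htb : t * b = b' := by
    unfold t; split
    · simpa using (by assumption : b' = b).symm
    · rcases hB with h | h
      · exact absurd h (by assumption)
      · rw [h]; ring
  have huc : u * c = c' := by
    unfold u; split
    · simpa using (by assumption : c' = c).symm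
    · rcases hC with h | h
      · exact absurd h (by assumption)
      · rw [h]; ring
  by_cases ha0 : a = 0
  · have ha'0 : a' = 0 := by rcases hA with h|h <;> rw [h, ha0] <;> ring
    refine ⟨t * u, t, u, ?_, ht1, hu1, ?_, ?_, htb, huc⟩
    · rcases ht1 with h|h <;> rcases hu1 with h'|h' <;> rw [h, h'] <;> norm_num
    · rcases ht1 with h|h <;> rcases hu1 with h'|h' <;> rw [h, h'] <;> norm_num
    · rw [ha0, ha'0]; ring
  by_cases hb0 : b = 0
  · have hb'0 : b' = 0 := by rcases hB with h|h <;> rw [h, hb0] <;> ring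
    refine ⟨s, s * u, u, hs1, ?_, hu1, ?_, hsa, ?_, huc⟩
    · rcases hs1 with h|h <;> rcases hu1 with h'|h' <;> rw [h, h'] <;> norm_num
    · rcases hs1 with h|h <;> rcases hu1 with h'|h' <;> rw [h, h'] <;> norm_num
    · rw [hb0, hb'0]; ring
  by_cases hc0 : c = 0
  · have hc'0 : c' = 0 := by rcases hC with h|h <;> rw [h, hc0] <;> ring
    refine ⟨s, t, s * t, hs1, ht1, ?_, ?_, hsa, htb, ?_⟩
    · rcases hs1 with h|h <;> rcases ht1 with h'|h' <;> rw [h, h'] <;> norm_num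
    · rcases hs1 with h|h <;> rcases ht1 with h'|h' <;> rw [h, h'] <;> norm_num
    · rw [hc0, hc'0]; ring
  · refine ⟨s, t, u, hs1, ht1, hu1, ?_, hsa, htb, huc⟩
    have habc : a * b * c ≠ 0 := by
      simp [ha0, hb0, hc0]
    have key : (s * t * u) * (a * b * c) = 1 * (a * b * c) := by
      calc (s * t * u) * (a * b * c) = (s*a) * ((t*b) * (u*c)) := by ring
        _ = a' * (b' * c') := by rw [hsa, htb, huc]
        _ = 1 * (a * b * c) := by rw [one_mul]; linear_combination -hprod
    exact mul_right_cancel₀ habc key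

lemma extend_pair (u v w u' v' w' : E2)
    (huu : ⟪u,u⟫ = ⟪u',u'⟫) (huv : ⟪u,v⟫ = ⟪u',v'⟫) (huw : ⟪u,w⟫ = ⟪u',w'⟫)
    (hvv : ⟪v,v⟫ = ⟪v',v'⟫) (hvw : ⟪v,w⟫ = ⟪v',w'⟫) (hww : ⟪w,w⟫ = ⟪w',w'⟫)
    (ind : LinearIndependent ℝ ![u, v]) :
    ∃ U : E2 ≃ₗᵢ[ℝ] E2, U u = u' ∧ U v = v' ∧ U w = w' := by
  have key : ∀ p q r s : ℝ, ⟪p•u'+q•v', r•u'+s•v'⟫ = ⟪p•u+q•v, r•u+s•v⟫ := by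
    intro p q r s
    simp only [inner_add_left, inner_add_right, real_inner_smul_left, real_inner_smul_right,
      real_inner_comm u' v', real_inner_comm u v, huu, huv, hvv]
  have keyw : ∀ p q : ℝ, ⟪p•u'+q•v', w'⟫ = ⟪p•u+q•v, w⟫ := by
    intro p q
    simp only [inner_add_left, real_inner_smul_left, huw, hvw]
  have ind' : LinearIndependent ℝ ![u', v'] := by
    rw [LinearIndependent.pair_iff]
    intro s t hst
    have h0 : ⟪s•u+t•v, s•u+t•v⟫ = 0 := by rw [← key, hst]; exact inner_zero_left _
    exact LinearIndependent.pair_iff.mp ind s t (inner_self_eq_zero.mp h0)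
  have hcard : Fintype.card (Fin 2) = Module.finrank ℝ E2 := by simp
  let B := basisOfLinearIndependentOfCardEqFinrank ind hcard
  let B' := basisOfLinearIndependentOfCardEqFinrank ind' hcard
  have hB0 : B 0 = u := by simp [B, coe_basisOfLinearIndependentOfCardEqFinrank]
  have hB1 : B 1 = v := by simp [B, coe_basisOfLinearIndependentOfCardEqFinrank]
  have hB0' : B' 0 = u' := by simp [B', coe_basisOfLinearIndependentOfCardEqFinrank]
  have hB1' : B' 1 = v' := by simp [B', coe_basisOfLinearIndependentOfCardEqFinrank]
  let L := B.equiv B' (Equiv.refl _)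
  have hrep : ∀ x : E2, x = B.repr x 0 • u + B.repr x 1 • v := by
    intro x
    have hs := B.sum_repr x
    rw [Fin.sum_univ_two, hB0, hB1] at hs
    exact hs.symm
  have hLB : ∀ i, L (B i) = B' i := fun i => by
    have h := B.equiv_apply i B' (Equiv.refl _)
    simpa [L] using h
  have hL : ∀ x : E2, L x = B.repr x 0 • u' + B.repr x 1 • v' := by
    intro x
    conv_lhs => rw [hrep x, ← hB0, ← hB1]
    rw [map_add, map_smul, map_smul, hLB 0, hLB 1, hB0', hB1']
  have hinner : ∀ x y : E2, ⟪L x, L y⟫ = ⟪x, y⟫ := by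
    intro x y
    rw [hL x, hL y, key, ← hrep x, ← hrep y]
  have hLw : L w = w' := by
    have hzero : ⟪L w - w', L w - w'⟫ = 0 := by
      rw [inner_sub_sub_self]
      have e1 : ⟪L w, L w⟫ = ⟪w, w⟫ := hinner w w
      have e2 : ⟪L w, w'⟫ = ⟪w, w⟫ := by rw [hL w, keyw, ← hrep w]
      have e3 : ⟪w', L w⟫ = ⟪w, w⟫ := (real_inner_comm (L w) w').trans e2
      rw [e1, e2, e3, ← hww]
      ring
    exact sub_eq_zero.mp (inner_self_eq_zero.mp hzero)
  refine ⟨LinearEquiv.isometryOfInner L hinner, ?_, ?_, hLw⟩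
  · show L u = u'
    rw [← hB0, hLB 0, hB0']
  · show L v = v'
    rw [← hB1, hLB 1, hB1']

lemma gram_to_isometry (h g : Fin 3 → E2)
    (hn : ∀ i, ⟪h i, h i⟫ = 1)
    (hG : ∀ i j, ⟪h i, h j⟫ = ⟪g i, g j⟫)
    (hspan : Submodule.span ℝ (Set.range h) = ⊤) :
    ∃ U : E2 ≃ₗᵢ[ℝ] E2, ∀ i, U (h i) = g i := by
  by_cases h01 : ⟪h 0, h 1⟫ ^ 2 = 1
  · by_cases h02 : ⟪h 0, h 2⟫ ^ 2 = 1
    · exfalso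
      have e1 : h 1 = ⟪h 0, h 1⟫ • h 0 := eq_smul_of_sq_eq_one (hn 0) (hn 1) h01
      have e2 : h 2 = ⟪h 0, h 2⟫ • h 0 := eq_smul_of_sq_eq_one (hn 0) (hn 2) h02
      have hle : Submodule.span ℝ (Set.range h) ≤ Submodule.span ℝ {h 0} := by
        rw [Submodule.span_le]
        rintro x ⟨i, rfl⟩
        fin_cases i <;> simp only []
        · exact Submodule.mem_span_singleton_self _
        · show h 1 ∈ _
          rw [e1]; exact Submodule.smul_mem _ _ (Submodule.mem_span_singleton_self _)
        · show h 2 ∈ _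
          rw [e2]; exact Submodule.smul_mem _ _ (Submodule.mem_span_singleton_self _)
      rw [hspan] at hle
      have htop : Submodule.span ℝ {h 0} = ⊤ := le_antisymm le_top hle
      have hne : h 0 ≠ 0 := by
        intro hz
        have := hn 0
        rw [hz] at this
        simp at this
      have hr1 : Module.finrank ℝ (Submodule.span ℝ {h 0}) = 1 :=
        finrank_span_singleton hne
      rw [htop] at hr1
      rw [finrank_top] at hr1
      simp at hr1
    · -- pair (0, 2) independent
      obtain ⟨U, hU0, hU2, hU1⟩ := extend_pair (h 0) (h 2) (h 1) (g 0) (g 2) (g 1)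
        (hG 0 0) (hG 0 2) (hG 0 1) (hG 2 2) (hG 2 1) (hG 1 1)
        (indep_of_sq_ne_one (hn 0) (hn 2) h02)
      exact ⟨U, fun i => by fin_cases i <;> assumption⟩
  · obtain ⟨U, hU0, hU1, hU2⟩ := extend_pair (h 0) (h 1) (h 2) (g 0) (g 1) (g 2)
      (hG 0 0) (hG 0 1) (hG 0 2) (hG 1 1) (hG 1 2) (hG 2 2)
      (indep_of_sq_ne_one (hn 0) (hn 1) h01)
    exact ⟨U, fun i => by fin_cases i <;> assumption⟩

lemma inner_self_one {u : E2} (h : ‖u‖ = 1) : ⟪u,u⟫ = 1 := by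
  rw [real_inner_self_eq_norm_sq, h]; norm_num

lemma frameEquiv_of_abs_eq (f g : Fin 3 → E2)
    (hf1 : ∀ i, ‖f i‖ = 1) (hg1 : ∀ i, ‖g i‖ = 1)
    (hfspan : Submodule.span ℝ (Set.range f) = ⊤)
    (e01 : |⟪f 0, f 1⟫| = |⟪g 0, g 1⟫|)
    (e02 : |⟪f 0, f 2⟫| = |⟪g 0, g 2⟫|)
    (e12 : |⟪f 1, f 2⟫| = |⟪g 1, g 2⟫|) :
    FrameEquiv f g := by
  have hfd := gramDet (f 0) (f 1) (f 2)
  have hgd := gramDet (g 0) (g 1) (g 2)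
  rw [inner_self_one (hf1 0), inner_self_one (hf1 1), inner_self_one (hf1 2)] at hfd
  rw [inner_self_one (hg1 0), inner_self_one (hg1 1), inner_self_one (hg1 2)] at hgd
  have sqa : ⟪f 0, f 1⟫^2 = ⟪g 0, g 1⟫^2 := by rw [← sq_abs, ← sq_abs ⟪g 0, g 1⟫, e01]
  have sqb : ⟪f 0, f 2⟫^2 = ⟪g 0, g 2⟫^2 := by rw [← sq_abs, ← sq_abs ⟪g 0, g 2⟫, e02]
  have sqc : ⟪f 1, f 2⟫^2 = ⟪g 1, g 2⟫^2 := by rw [← sq_abs, ← sq_abs ⟪g 1, g 2⟫, e12]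
  have hprod : ⟪f 0, f 1⟫ * ⟪f 0, f 2⟫ * ⟪f 1, f 2⟫ = ⟪g 0, g 1⟫ * ⟪g 0, g 2⟫ * ⟪g 1, g 2⟫ := by
    linarith [hfd, hgd, sqa, sqb, sqc]
  obtain ⟨s, t, u, hs1, ht1, hu1, hstu, hsa, htb, huc⟩ :=
    sign_exists _ _ _ _ _ _ e01 e02 e12 hprod
  have hst : s * t = u := by
    rcases hu1 with h|h <;> rw [h] at hstu ⊢ <;> nlinarith
  have hεpm : ∀ i : Fin 3, (![1, s, t] : Fin 3 → ℝ) i = 1 ∨ (![1, s, t] : Fin 3 → ℝ) i = -1 := by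
    intro i; fin_cases i
    · exact Or.inl rfl
    · exact hs1
    · exact ht1
  have hεn : ∀ i : Fin 3, (![1, s, t] : Fin 3 → ℝ) i * (![1, s, t] : Fin 3 → ℝ) i = 1 := by
    intro i; rcases hεpm i with h'|h' <;> rw [h'] <;> norm_num
  have hn : ∀ i : Fin 3, ⟪(![1, s, t] : Fin 3 → ℝ) i • f i, (![1, s, t] : Fin 3 → ℝ) i • f i⟫ = 1 := by
    intro i
    rw [real_inner_smul_left, real_inner_smul_right, inner_self_one (hf1 i)]
    linear_combination hεn i
  have hss : s * s = 1 := by rcases hs1 with h|h <;> rw [h] <;> norm_num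
  have htt : t * t = 1 := by rcases ht1 with h|h <;> rw [h] <;> norm_num
  have hG : ∀ i j : Fin 3, ⟪(![1, s, t] : Fin 3 → ℝ) i • f i, (![1, s, t] : Fin 3 → ℝ) j • f j⟫
      = ⟪g i, g j⟫ := by
    have d00 : ⟪f 0, f 0⟫ = ⟪g 0, g 0⟫ := by
      rw [inner_self_one (hf1 0), inner_self_one (hg1 0)]
    have d11 : ⟪f 1, f 1⟫ = ⟪g 1, g 1⟫ := by
      rw [inner_self_one (hf1 1), inner_self_one (hg1 1)]
    have d22 : ⟪f 2, f 2⟫ = ⟪g 2, g 2⟫ := by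
      rw [inner_self_one (hf1 2), inner_self_one (hg1 2)]
    intro i j
    rw [real_inner_smul_left, real_inner_smul_right]
    fin_cases i <;> fin_cases j
    · show (1:ℝ) * ((1:ℝ) * ⟪f 0, f 0⟫) = ⟪g 0, g 0⟫
      rw [d00]; ring
    · show (1:ℝ) * (s * ⟪f 0, f 1⟫) = ⟪g 0, g 1⟫
      rw [← hsa]; ring
    · show (1:ℝ) * (t * ⟪f 0, f 2⟫) = ⟪g 0, g 2⟫
      rw [← htb]; ring
    · show s * ((1:ℝ) * ⟪f 1, f 0⟫) = ⟪g 1, g 0⟫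
      rw [real_inner_comm (f 0) (f 1), real_inner_comm (g 0) (g 1), ← hsa]; ring
    · show s * (s * ⟪f 1, f 1⟫) = ⟪g 1, g 1⟫
      rw [d11]; linear_combination ⟪g 1, g 1⟫ * hss
    · show s * (t * ⟪f 1, f 2⟫) = ⟪g 1, g 2⟫
      rw [← huc, ← hst]; ring
    · show t * ((1:ℝ) * ⟪f 2, f 0⟫) = ⟪g 2, g 0⟫
      rw [real_inner_comm (f 0) (f 2), real_inner_comm (g 0) (g 2), ← htb]; ring
    · show t * (s * ⟪f 2, f 1⟫) = ⟪g 2, g 1⟫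
      rw [real_inner_comm (f 1) (f 2), real_inner_comm (g 1) (g 2), ← huc, ← hst]; ring
    · show t * (t * ⟪f 2, f 2⟫) = ⟪g 2, g 2⟫
      rw [d22]; linear_combination ⟪g 2, g 2⟫ * htt
  have hspan : Submodule.span ℝ (Set.range (fun i => (![1, s, t] : Fin 3 → ℝ) i • f i)) = ⊤ := by
    refine le_antisymm le_top ?_
    rw [← hfspan, Submodule.span_le]
    rintro x ⟨i, rfl⟩
    have hfi : f i = (![1, s, t] : Fin 3 → ℝ) i • ((![1, s, t] : Fin 3 → ℝ) i • f i) := by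
      rw [smul_smul, hεn i, one_smul]
    rw [hfi]
    exact Submodule.smul_mem _ _ (Submodule.subset_span ⟨i, rfl⟩)
  obtain ⟨U, hU⟩ := gram_to_isometry (fun i => (![1, s, t] : Fin 3 → ℝ) i • f i) g hn hG hspan
  refine ⟨U, Equiv.refl _, ![1, s, t], hεpm, fun i => ?_⟩
  have h2 := hU i
  simp only [map_smul] at h2
  rw [← h2]
  rfl

lemma comp_equiv (f g : Fin 3 → E2) (σ : Equiv.Perm (Fin 3))
    (h : FrameEquiv (f ∘ σ) g) : FrameEquiv f g := by
  obtain ⟨U, τ, ε, hε, hU⟩ := h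
  exact ⟨U, τ.trans σ, ε, hε, fun i => hU i⟩

lemma absGram_of_frameEquiv (f g : Fin 3 → E2) (hFE : FrameEquiv f g) :
    ({|⟪f 0, f 1⟫|, |⟪f 0, f 2⟫|, |⟪f 1, f 2⟫|} : Multiset ℝ) =
      ({|⟪g 0, g 1⟫|, |⟪g 0, g 2⟫|, |⟪g 1, g 2⟫|} : Multiset ℝ) := by
  obtain ⟨U, σ, ε, hε, hg⟩ := hFE
  have habs : ∀ i j, |⟪g i, g j⟫| = |⟪f (σ i), f (σ j)⟫| := by
    intro i j
    rw [hg i, hg j, real_inner_smul_left, real_inner_smul_right,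
      LinearIsometryEquiv.inner_map_map, abs_mul, abs_mul]
    rcases hε i with h|h <;> rcases hε j with h'|h' <;> rw [h, h'] <;> simp
  have hc01 : |⟪f 1, f 0⟫| = |⟪f 0, f 1⟫| := by rw [real_inner_comm (f 0) (f 1)]
  have hc02 : |⟪f 2, f 0⟫| = |⟪f 0, f 2⟫| := by rw [real_inner_comm (f 0) (f 2)]
  have hc12 : |⟪f 2, f 1⟫| = |⟪f 1, f 2⟫| := by rw [real_inner_comm (f 1) (f 2)]
  have e0 : σ 0 = 0 ∨ σ 0 = 1 ∨ σ 0 = 2 := by omega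
  have e1 : σ 1 = 0 ∨ σ 1 = 1 ∨ σ 1 = 2 := by omega
  have e2 : σ 2 = 0 ∨ σ 2 = 1 ∨ σ 2 = 2 := by omega
  rcases e0 with h0|h0|h0 <;> rcases e1 with h1|h1|h1 <;> rcases e2 with h2|h2|h2 <;>
    first
    | exact absurd (σ.injective (h0.trans h1.symm)) (by decide)
    | exact absurd (σ.injective (h0.trans h2.symm)) (by decide)
    | exact absurd (σ.injective (h1.trans h2.symm)) (by decide)
    | (rw [habs 0 1, habs 0 2, habs 1 2, h0, h1, h2]
       all_goals try simp only [hc01, hc02, hc12]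
       all_goals first
       | rfl
       | exact msA _ _ _
       | exact msB _ _ _
       | exact (msA _ _ _).trans (msB _ _ _)
       | exact (msB _ _ _).trans (msA _ _ _)
       | exact ((msA _ _ _).trans (msB _ _ _)).trans (msA _ _ _))

theorem frameEquiv_iff_absGram_eq (f g : Fin 3 → EuclideanSpace ℝ (Fin 2))
    (hf1 : ∀ i, ‖f i‖ = 1) (hg1 : ∀ i, ‖g i‖ = 1)
    (hfspan : Submodule.span ℝ (Set.range f) = ⊤)
    (hgspan : Submodule.span ℝ (Set.range g) = ⊤) :
    FrameEquiv f g ↔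
      ({|⟪f 0, f 1⟫|, |⟪f 0, f 2⟫|, |⟪f 1, f 2⟫|} : Multiset ℝ) =
        ({|⟪g 0, g 1⟫|, |⟪g 0, g 2⟫|, |⟪g 1, g 2⟫|} : Multiset ℝ) := by
  constructor
  · exact absGram_of_frameEquiv f g
  · intro hms
    have hcomm : ∀ i j : Fin 3, |⟪f i, f j⟫| = |⟪f j, f i⟫| := by
      intro i j; rw [real_inner_comm (f j) (f i)]
    rcases ms3_cases hms with ⟨hA,hB,hC⟩|⟨hA,hB,hC⟩|⟨hA,hB,hC⟩|⟨hA,hB,hC⟩|⟨hA,hB,hC⟩|⟨hA,hB,hC⟩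
    · refine comp_equiv f g (Equiv.refl _) (frameEquiv_of_abs_eq _ g (fun i => hf1 _) hg1 ?_ ?_ ?_ ?_)
      · rw [show Set.range (f ∘ ⇑(Equiv.refl (Fin 3))) = Set.range f from
          (Equiv.refl (Fin 3)).surjective.range_comp f]
        exact hfspan
      · exact hA.symm
      · exact hB.symm
      · exact hC.symm
    · -- g01=f01, g02=f12, g12=f02 ; σ = [1,0,2]
      refine comp_equiv f g ⟨![1,0,2], ![1,0,2], by decide, by decide⟩
        (frameEquiv_of_abs_eq _ g (fun i => hf1 _) hg1 ?_ ?_ ?_ ?_)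
      · rw [(Equiv.surjective _).range_comp f]; exact hfspan
      · show |⟪f 1, f 0⟫| = _
        rw [← hcomm 0 1]; exact hA.symm
      · show |⟪f 1, f 2⟫| = _
        exact hB.symm
      · show |⟪f 0, f 2⟫| = _
        exact hC.symm
    · -- g01=f02, g02=f01, g12=f12 ; σ = [0,2,1]
      refine comp_equiv f g ⟨![0,2,1], ![0,2,1], by decide, by decide⟩
        (frameEquiv_of_abs_eq _ g (fun i => hf1 _) hg1 ?_ ?_ ?_ ?_)
      · rw [(Equiv.surjective _).range_comp f]; exact hfspan
      · show |⟪f 0, f 2⟫| = _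
        exact hA.symm
      · show |⟪f 0, f 1⟫| = _
        exact hB.symm
      · show |⟪f 2, f 1⟫| = _
        rw [← hcomm 1 2]; exact hC.symm
    · -- g01=f02, g02=f12, g12=f01 ; σ = [2,0,1]
      refine comp_equiv f g ⟨![2,0,1], ![1,2,0], by decide, by decide⟩
        (frameEquiv_of_abs_eq _ g (fun i => hf1 _) hg1 ?_ ?_ ?_ ?_)
      · rw [(Equiv.surjective _).range_comp f]; exact hfspan
      · show |⟪f 2, f 0⟫| = _
        rw [← hcomm 0 2]; exact hA.symm
      · show |⟪f 2, f 1⟫| = _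
        rw [← hcomm 1 2]; exact hB.symm
      · show |⟪f 0, f 1⟫| = _
        exact hC.symm
    · -- g01=f12, g02=f01, g12=f02 ; σ = [1,2,0]
      refine comp_equiv f g ⟨![1,2,0], ![2,0,1], by decide, by decide⟩
        (frameEquiv_of_abs_eq _ g (fun i => hf1 _) hg1 ?_ ?_ ?_ ?_)
      · rw [(Equiv.surjective _).range_comp f]; exact hfspan
      · show |⟪f 1, f 2⟫| = _
        exact hA.symm
      · show |⟪f 1, f 0⟫| = _
        rw [← hcomm 0 1]; exact hB.symm
      · show |⟪f 2, f 0⟫| = _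
        rw [← hcomm 0 2]; exact hC.symm
    · -- g01=f12, g02=f02, g12=f01 ; σ = [2,1,0]
      refine comp_equiv f g ⟨![2,1,0], ![2,1,0], by decide, by decide⟩
        (frameEquiv_of_abs_eq _ g (fun i => hf1 _) hg1 ?_ ?_ ?_ ?_)
      · rw [(Equiv.surjective _).range_comp f]; exact hfspan
      · show |⟪f 2, f 1⟫| = _
        rw [← hcomm 1 2]; exact hA.symm
      · show |⟪f 2, f 0⟫| = _
        rw [← hcomm 0 2]; exact hB.symm
      · show |⟪f 1, f 0⟫| = _
        rw [← hcomm 0 1]; exact hC.symm
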